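/- For every v = (v₁, v₂) ∈ V_K, the divergence div v = ∂v₁/∂x + ∂v₂/∂y is a constant polynomial; moreover, div v = 0 if and only if v = curl w for some w ∈ W_K. In other words, the kernel of the divergence on V_K is exactly {curl w : w ∈ W_K}. -/

import Mathlib

open MvPolynomial

/-- Membership in the shape function space `W_K = P₃ ⊕ span{x⁴, y⁴}`. -/
def memWK (w : MvPolynomial (Fin 2) ℝ) : Prop :=
  ∃ (p : MvPolynomial (Fin 2) ℝ) (c d : ℝ),
    p.totalDegree ≤ 3 ∧ w = p + C c * X 0 ^ 4 + C d * X 1 ^ 4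

/-- Membership in the vector shape function space
`V_K = [P₁]² ⊕ span{curl x³, curl x²y, curl xy², curl y³, curl x⁴, curl y⁴}`,
where `curl φ = (∂φ/∂y, −∂φ/∂x)`. -/
def memVK (v : MvPolynomial (Fin 2) ℝ × MvPolynomial (Fin 2) ℝ) : Prop :=
  ∃ (p q φ : MvPolynomial (Fin 2) ℝ) (c1 c2 c3 c4 c5 c6 : ℝ),
    p.totalDegree ≤ 1 ∧ q.totalDegree ≤ 1 ∧
    φ = C c1 * X 0 ^ 3 + C c2 * X 0 ^ 2 * X 1 + C c3 * X 0 * X 1 ^ 2 +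
        C c4 * X 1 ^ 3 + C c5 * X 0 ^ 4 + C c6 * X 1 ^ 4 ∧
    v.1 = p + pderiv 1 φ ∧ v.2 = q - pderiv 0 φ

lemma my_pderiv_comm {σ : Type*} [DecidableEq σ] {R : Type*} [CommSemiring R]
    (i j : σ) (p : MvPolynomial σ R) :
    pderiv i (pderiv j p) = pderiv j (pderiv i p) := by
  induction p using MvPolynomial.induction_on' with
  | monomial s a =>
    simp only [pderiv_monomial]
    rcases eq_or_ne i j with rfl | h
    · rfl
    · congr 1
      · rw [tsub_right_comm]
      · rw [Finsupp.tsub_apply, Finsupp.tsub_apply, Finsupp.single_apply,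
          Finsupp.single_apply, if_neg h.symm, if_neg h]
        simp; ring
  | add p q hp hq => simp [hp, hq]

lemma deg1_repr (p : MvPolynomial (Fin 2) ℝ) (hp : p.totalDegree ≤ 1) :
    p = C (coeff 0 p) + C (coeff (Finsupp.single 0 1) p) * X 0 +
        C (coeff (Finsupp.single 1 1) p) * X 1 := by
  ext m
  have key : m = 0 ∨ m = Finsupp.single 0 1 ∨ m = Finsupp.single 1 1 ∨ 2 ≤ m 0 + m 1 := by
    rcases e0 : m 0 with _ | _ | k <;> rcases e1 : m 1 with _ | _ | l
    · left; ext i; fin_cases i <;> simp [e0, e1]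
    · right; right; left; ext i; fin_cases i <;> simp [e0, e1]
    · right; right; right; omega
    · right; left; ext i; fin_cases i <;> simp [e0, e1]
    all_goals right; right; right; omega
  simp only [coeff_add, coeff_C_mul, coeff_C, coeff_X']
  rcases key with rfl | rfl | rfl | hd
  · simp
  · simp [Finsupp.ext_iff, Fin.forall_fin_two]
  · simp [Finsupp.ext_iff, Fin.forall_fin_two]
  · have h2 : coeff m p = 0 := by
      apply coeff_eq_zero_of_totalDegree_lt
      refine lt_of_le_of_lt hp ?_
      have hsum : m.sum (fun _ n => n) = m 0 + m 1 := by
        rw [Finsupp.sum_fintype] <;> simp [Fin.sum_univ_two]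
      have : (∑ i ∈ m.support, m i) = m 0 + m 1 := hsum
      rw [this]; omega
    have ne0 : ¬ (0 : Fin 2 →₀ ℕ) = m := by rintro rfl; simp at hd
    have ne1 : ¬ Finsupp.single (0 : Fin 2) 1 = m := by rintro rfl; simp at hd
    have ne2 : ¬ Finsupp.single (1 : Fin 2) 1 = m := by rintro rfl; simp at hd
    rw [h2, if_neg ne0, if_neg ne1, if_neg ne2]
    ring

lemma pderiv_ofNat {σ R : Type*} [CommSemiring R] (i : σ) (n : ℕ) [n.AtLeastTwo] :
    pderiv i (OfNat.ofNat n : MvPolynomial σ R) = 0 := by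
  rw [← Nat.cast_ofNat]; exact Derivation.map_natCast _ _

lemma term_deg_le (r : ℝ) (m n : ℕ) (h : m + n ≤ 3) :
    (C r * X 0 ^ m * X 1 ^ n : MvPolynomial (Fin 2) ℝ).totalDegree ≤ 3 := by
  have h1 : (C r * X 0 ^ m : MvPolynomial (Fin 2) ℝ).totalDegree ≤ m :=
    (totalDegree_mul _ _).trans (by simp [totalDegree_X_pow])
  have h2 : ((X 1 : MvPolynomial (Fin 2) ℝ) ^ n).totalDegree ≤ n := by
    simp [totalDegree_X_pow]
  refine (totalDegree_mul _ _).trans ?_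
  omega

set_option maxHeartbeats 2000000 in
/-- for every `v ∈ V_K` the divergence is constant, and it
vanishes if and only if `v = curl w` for some `w ∈ W_K`. -/
theorem stmt2 (v : MvPolynomial (Fin 2) ℝ × MvPolynomial (Fin 2) ℝ) (hv : memVK v) :
    (∃ c : ℝ, pderiv 0 v.1 + pderiv 1 v.2 = C c) ∧
    (pderiv 0 v.1 + pderiv 1 v.2 = 0 ↔
      ∃ w : MvPolynomial (Fin 2) ℝ, memWK w ∧ v.1 = pderiv 1 w ∧ v.2 = -pderiv 0 w) := by
  obtain ⟨p, q, φ, c1, c2, c3, c4, c5, c6, hp, hq, hφ, hv1, hv2⟩ := hv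
  obtain ⟨a, b, c, hpr⟩ : ∃ a b c, p = C a + C b * X 0 + C c * X 1 :=
    ⟨_, _, _, deg1_repr p hp⟩
  obtain ⟨d, e, f, hqr⟩ : ∃ d e f, q = C d + C e * X 0 + C f * X 1 :=
    ⟨_, _, _, deg1_repr q hq⟩
  have h01 : (0 : Fin 2) ≠ 1 := by decide
  have h10 : (1 : Fin 2) ≠ 0 := by decide
  have hC2 : ∀ x : ℝ, (C (x / 2) * 2 : MvPolynomial (Fin 2) ℝ) = C x := by
    intro x
    rw [← map_ofNat (C : ℝ →+* MvPolynomial (Fin 2) ℝ) 2, ← C_mul]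
    norm_num
  have hdiv : pderiv 0 v.1 + pderiv 1 v.2 = C (b + f) := by
    rw [hv1, hv2, hpr, hqr, hφ]
    simp only [map_add, map_sub, map_zero, pderiv_one, pderiv_ofNat, Derivation.map_natCast,
      pderiv_C_mul, pderiv_mul, pderiv_pow, pderiv_X_self,
      pderiv_C, pderiv_X_of_ne h01, pderiv_X_of_ne h10, map_C]
    push_cast
    ring
  refine ⟨⟨b + f, hdiv⟩, ?_, ?_⟩
  · intro h0
    have hbf : b + f = 0 := (C_injective _ _) (by simpa using (hdiv.symm.trans h0))
    have hCbf : (C f : MvPolynomial (Fin 2) ℝ) = -C b := by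
      rw [show f = -b by linarith, map_neg]
    refine ⟨C a * X 0 ^ 0 * X 1 ^ 1 + C b * X 0 ^ 1 * X 1 ^ 1 + C (c / 2) * X 0 ^ 0 * X 1 ^ 2
        + C (-d) * X 0 ^ 1 * X 1 ^ 0 + C (-(e / 2)) * X 0 ^ 2 * X 1 ^ 0
        + C c1 * X 0 ^ 3 + C c2 * X 0 ^ 2 * X 1 + C c3 * X 0 * X 1 ^ 2 + C c4 * X 1 ^ 3
        + C c5 * X 0 ^ 4 + C c6 * X 1 ^ 4, ?_, ?_, ?_⟩
    · refine ⟨C a * X 0 ^ 0 * X 1 ^ 1 + C b * X 0 ^ 1 * X 1 ^ 1 + C (c / 2) * X 0 ^ 0 * X 1 ^ 2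
        + C (-d) * X 0 ^ 1 * X 1 ^ 0 + C (-(e / 2)) * X 0 ^ 2 * X 1 ^ 0
        + C c1 * X 0 ^ 3 * X 1 ^ 0 + C c2 * X 0 ^ 2 * X 1 ^ 1 + C c3 * X 0 ^ 1 * X 1 ^ 2
        + C c4 * X 0 ^ 0 * X 1 ^ 3, c5, c6, ?_, by ring⟩
      refine (totalDegree_add _ _).trans (max_le ((totalDegree_add _ _).trans (max_le
        ((totalDegree_add _ _).trans (max_le ((totalDegree_add _ _).trans (max_le
        ((totalDegree_add _ _).trans (max_le ((totalDegree_add _ _).trans (max_le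
        ((totalDegree_add _ _).trans (max_le ((totalDegree_add _ _).trans (max_le
        (term_deg_le _ _ _ (by norm_num)) (term_deg_le _ _ _ (by norm_num))))
        (term_deg_le _ _ _ (by norm_num)))) (term_deg_le _ _ _ (by norm_num))))
        (term_deg_le _ _ _ (by norm_num)))) (term_deg_le _ _ _ (by norm_num))))
        (term_deg_le _ _ _ (by norm_num)))) (term_deg_le _ _ _ (by norm_num))))
        (term_deg_le _ _ _ (by norm_num)))
    · rw [hv1, hpr, hφ]
      simp only [map_add, map_sub, map_zero, pderiv_one, pderiv_ofNat, Derivation.map_natCast,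
        pderiv_C_mul, pderiv_mul, pderiv_pow, pderiv_X_self,
        pderiv_C, pderiv_X_of_ne h01, pderiv_X_of_ne h10, map_C, map_neg]
      push_cast
      linear_combination (-1 : MvPolynomial (Fin 2) ℝ) * X 1 * hC2 c
    · rw [hv2, hqr, hφ]
      simp only [map_add, map_sub, map_zero, pderiv_one, pderiv_ofNat, Derivation.map_natCast,
        pderiv_C_mul, pderiv_mul, pderiv_pow, pderiv_X_self,
        pderiv_C, pderiv_X_of_ne h01, pderiv_X_of_ne h10, map_C, map_neg]
      push_cast
      linear_combination (-1 : MvPolynomial (Fin 2) ℝ) * X 0 * hC2 e +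
        (X 1 : MvPolynomial (Fin 2) ℝ) * hCbf
  · rintro ⟨w, _, hw1, hw2⟩
    rw [hw1, hw2, map_neg, my_pderiv_comm]
    ring
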